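/- Let A be a unital algebra generated by elements A_{ij} (i,j = 1,…,4) satisfying A_{ij} A_{kl} = η_{ki} η_{jl} A_{kl} A_{ij} for all i,j,k,l, where η is the symmetric matrix of phases [[1,1,μ̄,μ],[1,1,μ,μ̄],[μ,μ̄,1,1],[μ̄,μ,1,1]] with |μ| = 1. Then for each i and l, the element A_{il} commutes with its algebraic complement Â_{il} = Σ_{σ∈S₃} (−1)^{|σ|} ε^{σ₁…σ_{i−1} l σ_{i+1}…σ₄} η^{σ₁ l} ⋯ η^{σ_{i−1} l} A_{1,σ₁} ⋯ A_{i−1,σ_{i−1}} A_{i+1,σ_{i+1}} ⋯ A_{4,σ₄}, i.e. A_{il} Â_{il} = Â_{il} A_{il}. -/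

import Mathlib

open Complex
open scoped TensorProduct

noncomputable section

/-- The 4×4 deformation matrix of phases η = [[1,1,μ̄,μ],[1,1,μ,μ̄],[μ,μ̄,1,1],[μ̄,μ,1,1]]. -/
def eta (μ : ℂ) : Fin 4 → Fin 4 → ℂ :=
  ![![1, 1, star μ, μ], ![1, 1, μ, star μ],
    ![μ, star μ, 1, 1], ![star μ, μ, 1, 1]]

lemma mustar (μ : ℂ) (hμ : ‖μ‖ = 1) : μ * star μ = 1 := by
  rw [Complex.star_def, Complex.mul_conj]
  norm_cast
  simp [Complex.normSq_eq_norm_sq, hμ]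

lemma eta_diag (μ : ℂ) (l : Fin 4) : _root_.eta μ l l = 1 := by
  fin_cases l <;> simp [_root_.eta, Matrix.vecHead, Matrix.vecTail]

lemma row_prod (μ : ℂ) (hμ : ‖μ‖ = 1) (l : Fin 4) :
    ∏ m : Fin 4, _root_.eta μ l m = 1 := by
  have h := mustar μ hμ
  fin_cases l <;> simp [Fin.prod_univ_four, _root_.eta, Matrix.vecHead, Matrix.vecTail] <;>
    simpa [mul_comm] using h

lemma image_erase (i l : Fin 4) (σ : Equiv.Perm (Fin 4)) (hσ : σ i = l) :
    (Finset.univ.erase i).image σ = Finset.univ.erase l := by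
  ext m
  simp only [Finset.mem_image, Finset.mem_erase, Finset.mem_univ, and_true]
  constructor
  · rintro ⟨k, hk, rfl⟩
    exact fun h => hk (σ.injective (h.trans hσ.symm))
  · intro hm
    refine ⟨σ.symm m, fun h => hm ?_, σ.apply_symm_apply m⟩
    rw [← σ.apply_symm_apply m, h, hσ]

lemma prod_sigma (μ : ℂ) (hμ : ‖μ‖ = 1) (i l : Fin 4)
    (σ : Equiv.Perm (Fin 4)) (hσ : σ i = l) :
    ∏ k ∈ Finset.univ.erase i, _root_.eta μ l (σ k) = 1 := by
  rw [← Finset.prod_image (fun x _ y _ h => σ.injective h), image_erase i l σ hσ,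
    Finset.prod_erase _ (eta_diag μ l), row_prod μ hμ l]

lemma prod_col (μ : ℂ) (hμ : ‖μ‖ = 1) (i : Fin 4) :
    ∏ k ∈ Finset.univ.erase i, _root_.eta μ k i = 1 := by
  rw [Finset.prod_erase (f := fun k => _root_.eta μ k i) _ (eta_diag μ i)]
  have h := mustar μ hμ
  fin_cases i <;> simp [Fin.prod_univ_four, _root_.eta, Matrix.vecHead, Matrix.vecTail] <;>
    simpa [mul_comm] using h

lemma phase (μ : ℂ) (hμ : ‖μ‖ = 1) (i l : Fin 4)
    (σ : Equiv.Perm (Fin 4)) (hσ : σ i = l) :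
    ∏ k ∈ Finset.univ.erase i, (_root_.eta μ k i * _root_.eta μ l (σ k)) = 1 := by
  rw [Finset.prod_mul_distrib, prod_col μ hμ i, prod_sigma μ hμ i l σ hσ, one_mul]

lemma comm3 {R : Type*} [Ring R] [Algebra ℂ R] (a b c d : R) (p q r : ℂ)
    (hab : a * b = p • (b * a)) (hac : a * c = q • (c * a)) (had : a * d = r • (d * a))
    (h : p * q * r = 1) : a * (b * c * d) = b * c * d * a := by
  have key : a * (b * c * d) = (p * q * r) • (b * c * d * a) := by
    calc a * (b * c * d) = (a * b) * c * d := by rw [← mul_assoc, ← mul_assoc]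
    _ = (p • (b * a)) * c * d := by rw [hab]
    _ = p • (b * (a * c) * d) := by simp only [smul_mul_assoc, mul_assoc]
    _ = p • (b * (q • (c * a)) * d) := by rw [hac]
    _ = (p * q) • (b * (c * (a * d))) := by
        simp only [mul_smul_comm, smul_mul_assoc, mul_smul, mul_assoc]
    _ = (p * q) • (b * (c * (r • (d * a)))) := by rw [had]
    _ = (p * q * r) • (b * c * d * a) := by
        simp only [mul_smul_comm, mul_smul, mul_assoc]
  rw [key, h, one_smul]

/-- The twisting tensor ε: equal to 1 except ε^{1324} = μ and its cyclic permutations,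
ε^{1423} = μ̄ and its cyclic permutations (written here with 0-based indices). -/
def eps (μ : ℂ) (i j k l : Fin 4) : ℂ :=
  if (i,j,k,l) = ((0:Fin 4),(2:Fin 4),(1:Fin 4),(3:Fin 4)) ∨ (i,j,k,l) = (2,1,3,0) ∨
     (i,j,k,l) = (1,3,0,2) ∨ (i,j,k,l) = (3,0,2,1) then μ
  else if (i,j,k,l) = ((0:Fin 4),3,1,2) ∨ (i,j,k,l) = (3,1,2,0) ∨
     (i,j,k,l) = (1,2,0,3) ∨ (i,j,k,l) = (2,0,3,1) then star μ
  else 1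

/-- The quantum determinant det(A_θ) = Σ_σ (−1)^{|σ|} ε^σ A_{1σ(1)}A_{2σ(2)}A_{3σ(3)}A_{4σ(4)}. -/
def qdet {R : Type*} [Ring R] [Algebra ℂ R] (μ : ℂ) (A : Fin 4 → Fin 4 → R) : R :=
  ∑ σ : Equiv.Perm (Fin 4),
    (((Equiv.Perm.sign σ : ℤ) : ℂ) * eps μ (σ 0) (σ 1) (σ 2) (σ 3)) •
      (A 0 (σ 0) * A 1 (σ 1) * A 2 (σ 2) * A 3 (σ 3))

/-- The algebraic complement (quantum cofactor) Â_{il}: a signed sum over the permutations σ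
of {1,…,4} with σ(i) = l, of the twisted products of the entries A_{k,σ(k)}, k ≠ i, taken in
increasing order of k, with prefactor ε^{σ₁…l…σ₄} η^{σ₁ l} ⋯ η^{σ_{i−1} l}.  (The sign of the
induced permutation of three letters is (−1)^{i+l} times the sign of σ.) -/
def cof {R : Type*} [Ring R] [Algebra ℂ R] (μ : ℂ) (A : Fin 4 → Fin 4 → R) (i l : Fin 4) : R :=
  ∑ σ : Equiv.Perm (Fin 4),
    if σ i = l then
      (((-1 : ℂ)) ^ ((i : ℕ) + (l : ℕ)) * ((Equiv.Perm.sign σ : ℤ) : ℂ) *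
        eps μ (σ 0) (σ 1) (σ 2) (σ 3) *
        (((List.finRange 4).filter (fun k => decide (k < i))).map
          (fun k => eta μ (σ k) l)).prod) •
      (((List.finRange 4).map (fun k => if k = i then (1 : R) else A k (σ k))).prod)
    else 0

/-- each entry A_{il} commutes with its algebraic complement Â_{il}. -/
theorem stmt4 {R : Type*} [Ring R] [Algebra ℂ R]
    (μ : ℂ) (hμ : ‖μ‖ = 1)
    (A : Fin 4 → Fin 4 → R)
    (hA : ∀ i j k l, A i j * A k l = (eta μ k i * eta μ j l) • (A k l * A i j)) :
    ∀ i l, A i l * cof μ A i l = cof μ A i l * A i l := by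
  intro i l
  unfold cof
  rw [Finset.mul_sum, Finset.sum_mul]
  refine Finset.sum_congr rfl fun σ _ => ?_
  by_cases hσ : σ i = l
  · rw [if_pos hσ, mul_smul_comm, smul_mul_assoc]
    congr 1
    have hfr : List.finRange 4 = [0,1,2,3] := by decide
    rw [hfr]
    simp only [List.map_cons, List.map_nil, List.prod_cons, List.prod_nil, mul_one]
    fin_cases i <;> simp
    · have hph := phase μ hμ 0 l σ hσ
      rw [show Finset.univ.erase (0:Fin 4) = ({1,2,3} : Finset (Fin 4)) from by decide,
        Finset.prod_insert (by decide), Finset.prod_insert (by decide),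
        Finset.prod_singleton] at hph
      rw [← mul_assoc (A 1 (σ 1))]
      exact comm3 _ _ _ _ _ _ _ (hA 0 l 1 (σ 1)) (hA 0 l 2 (σ 2)) (hA 0 l 3 (σ 3))
        (by rw [mul_assoc]; exact hph)
    · have hph := phase μ hμ 1 l σ hσ
      rw [show Finset.univ.erase (1:Fin 4) = ({0,2,3} : Finset (Fin 4)) from by decide,
        Finset.prod_insert (by decide), Finset.prod_insert (by decide),
        Finset.prod_singleton] at hph
      rw [← mul_assoc (A 0 (σ 0))]
      exact comm3 _ _ _ _ _ _ _ (hA 1 l 0 (σ 0)) (hA 1 l 2 (σ 2)) (hA 1 l 3 (σ 3))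
        (by rw [mul_assoc]; exact hph)
    · have hph := phase μ hμ 2 l σ hσ
      rw [show Finset.univ.erase (2:Fin 4) = ({0,1,3} : Finset (Fin 4)) from by decide,
        Finset.prod_insert (by decide), Finset.prod_insert (by decide),
        Finset.prod_singleton] at hph
      rw [← mul_assoc (A 0 (σ 0))]
      exact comm3 _ _ _ _ _ _ _ (hA 2 l 0 (σ 0)) (hA 2 l 1 (σ 1)) (hA 2 l 3 (σ 3))
        (by rw [mul_assoc]; exact hph)
    · have hph := phase μ hμ 3 l σ hσ
      rw [show Finset.univ.erase (3:Fin 4) = ({0,1,2} : Finset (Fin 4)) from by decide,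
        Finset.prod_insert (by decide), Finset.prod_insert (by decide),
        Finset.prod_singleton] at hph
      rw [← mul_assoc (A 0 (σ 0))]
      exact comm3 _ _ _ _ _ _ _ (hA 3 l 0 (σ 0)) (hA 3 l 1 (σ 1)) (hA 3 l 2 (σ 2))
        (by rw [mul_assoc]; exact hph)
  · simp [hσ]
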